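/- arXiv:0710.2088 — 2 statements merged into one kernel-verified Lean document; each statement's English description precedes it below -/
import Mathlib

section
/- Let q = p^d be a prime power, let n be an odd prime with n ≠ p, and let f : ZMod n → F_q be a nontrivial multiplicative function, viewed as a vector in F_q^n. Let B be a circulant n×n matrix over F_q with associated polynomial B(y), and A = B·Δ. Then f is a most complicated point for A if and only if gcd(B(y), ∑_{i=0}^{n−1} y^i) ≠ 1 in F_q[y]. -/
open Function Polynomial Finset
open scoped Matrix
set_option maxHeartbeats 1000000

/-- The preperiod of the orbit of `x` under `T`: the least `s ≥ 0` such that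
`T^[s+t] x = T^[s] x` for some `t ≥ 1`. -/
noncomputable def orbitPreperiod {S : Type*} (T : S → S) (x : S) : ℕ :=
  sInf {s | ∃ t, 1 ≤ t ∧ T^[s + t] x = T^[s] x}

/-- The (eventual) period of the orbit of `x` under `T`: the least `t ≥ 1` such that
`T^[s+t] x = T^[s] x` for some `s ≥ 0`. -/
noncomputable def orbitPeriod {S : Type*} (T : S → S) (x : S) : ℕ :=
  sInf {t | 1 ≤ t ∧ ∃ s, T^[s + t] x = T^[s] x}

/-- `x` is most complicated for `T` if both its period and its preperiod are maximal. -/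
def MostComplicated {S : Type*} [Fintype S] (T : S → S) (x : S) : Prop :=
  orbitPeriod T x = Finset.univ.sup (fun y => orbitPeriod T y) ∧
  orbitPreperiod T x = Finset.univ.sup (fun y => orbitPreperiod T y)

/-- `x` is almost most complicated for `T` if its period is maximal and its preperiod
equals the maximal preperiod minus one. -/
def AlmostMostComplicated {S : Type*} [Fintype S] (T : S → S) (x : S) : Prop :=
  orbitPeriod T x = Finset.univ.sup (fun y => orbitPeriod T y) ∧
  orbitPreperiod T x = Finset.univ.sup (fun y => orbitPreperiod T y) - 1

/-- The cyclic shift operator `δ` on `F^n`: `(δ x) i = x (i+1)`. -/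
def shiftOp (F : Type*) [Field F] (n : ℕ) : (ZMod n → F) →ₗ[F] (ZMod n → F) where
  toFun x := fun i => x (i + 1)
  map_add' _ _ := rfl
  map_smul' _ _ := rfl

/-- A multiplicative function `ZMod n → F`: vanishes at `0`, is not identically zero on
nonzero elements, and is multiplicative on nonzero elements. -/
def IsMultFun {n : ℕ} {F : Type*} [Field F] (f : ZMod n → F) : Prop :=
  f 0 = 0 ∧ (∃ a : ZMod n, a ≠ 0 ∧ f a ≠ 0) ∧
    ∀ a b : ZMod n, a ≠ 0 → b ≠ 0 → f (a * b) = f a * f b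

theorem pow_descend' {Q : Type*} [CommRing Q] [IsReduced Q] (a : Q) :
    ∀ (m t : ℕ), 1 ≤ t → a ^ (m + 1) = a ^ (m + 1 + t) → a = a ^ (1 + t) := by
  have pcong : ∀ {i j : ℕ}, i = j → a ^ i = a ^ j := fun h => by rw [h]
  intro m
  induction m with
  | zero => intro t ht h; simpa using h
  | succ m ih =>
    intro t ht h
    apply ih t ht
    have key : ∀ r : ℕ, a ^ (m + 2 + r) = a ^ (m + 2 + t + r) := by
      intro r
      calc a ^ (m + 2 + r) = a ^ (m + 1 + 1) * a ^ r := by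
            rw [← pow_add]; try exact pcong (by omega)
        _ = a ^ (m + 1 + 1 + t) * a ^ r := by rw [h]
        _ = a ^ (m + 2 + t + r) := by rw [← pow_add]; try exact pcong (by omega)
    have hxy : a ^ (m+1) * a ^ (m+1) = a ^ (m+1) * a ^ (m+1+t) := by
      rw [← pow_add, ← pow_add]
      exact (pcong (by omega)).trans ((key m).trans (pcong (by omega)))
    have hyy : a ^ (m+1) * a ^ (m+1+t) = a ^ (m+1+t) * a ^ (m+1+t) := by
      rw [← pow_add, ← pow_add]
      exact (pcong (by omega)).trans ((key (m+t)).trans (pcong (by omega)))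
    have hb : (a ^ (m+1) - a ^ (m+1+t)) ^ 2 = 0 := by linear_combination hxy - hyy
    exact sub_eq_zero.mp (IsNilpotent.eq_zero ⟨2, hb⟩)

theorem exists_pow_fix' {Q : Type*} [CommRing Q] [IsReduced Q] [Finite Q] (a : Q) :
    ∃ t, 1 ≤ t ∧ a ^ (1 + t) = a := by
  have pcong : ∀ {i j : ℕ}, i = j → a ^ i = a ^ j := fun h => by rw [h]
  obtain ⟨k₁, k₂, hne, he⟩ := Finite.exists_ne_map_eq_of_infinite (fun k : ℕ => a ^ (k + 1))
  rcases hne.lt_or_gt with hlt | hlt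
  · exact ⟨k₂ - k₁, by omega,
      (pow_descend' a k₁ (k₂ - k₁) (by omega) (he.trans (pcong (by omega)))).symm⟩
  · exact ⟨k₁ - k₂, by omega,
      (pow_descend' a k₂ (k₁ - k₂) (by omega) (he.symm.trans (pcong (by omega)))).symm⟩

/-- Theorem 2': a nontrivial multiplicative function `f : ZMod n → F_q`
(`n` an odd prime, `n ≠ p = char F_q`) is a most complicated point for `A = B·Δ`
(with `B` the circulant of `b`) iff `gcd(B(y), 1+y+⋯+y^{n-1}) ≠ 1` in `F_q[y]`. -/
theorem stmt11 (p d q n : ℕ) (hp : p.Prime) (hq : q = p ^ d)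
    [Fact n.Prime] (hodd : Odd n) (hnp : n ≠ p)
    (F : Type) [Field F] [Fintype F] [CharP F p] (hF : Fintype.card F = q)
    (f : ZMod n → F) (hf : IsMultFun f)
    (hnt : ∃ a : ZMod n, a ≠ 0 ∧ f a ≠ 1)
    (b : ZMod n → F)
    (A : Matrix (ZMod n) (ZMod n) F)
    (hA : A = Matrix.circulant b *
        (Matrix.circulant (fun i : ZMod n => if i = -1 then (1 : F) else 0) - 1)) :
    MostComplicated (fun y : ZMod n → F => A.mulVec y) f ↔
      ¬ IsCoprime (∑ i : ZMod n, C (b i) * X ^ i.val)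
          (∑ i ∈ Finset.range n, (X : Polynomial F) ^ i) := by
  classical
  have hnprime : n.Prime := Fact.out
  haveI : NeZero n := ⟨hnprime.ne_zero⟩
  haveI : Fact (1 < n) := ⟨hnprime.one_lt⟩
  have hn1 : 1 ≤ n := hnprime.one_lt.le
  -- characteristic facts
  have hnF : (n : F) ≠ 0 := by
    rw [Ne, CharP.cast_eq_zero_iff F p n]
    intro hdvd
    exact hnp ((Nat.prime_dvd_prime_iff_eq hp hnprime).mp hdvd).symm
  -- polynomials
  set B : Polynomial F := ∑ i : ZMod n, C (b i) * X ^ i.val with hB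
  set g : Polynomial F := ∑ i ∈ Finset.range n, (X : Polynomial F) ^ i with hgdef
  set P : Polynomial F := X ^ n - 1 with hP
  have hgP : g * (X - 1) = P := geom_sum_mul X n
  -- the quotient ring
  set Q := AdjoinRoot P with hQ
  haveI : IsReduced Q := by
    have hsep : (P : Polynomial F).Separable := by
      have := Polynomial.separable_X_pow_sub_C (1 : F) hnF one_ne_zero
      rwa [map_one] at this
    exact (Ideal.isRadical_iff_quotient_reduced _).mp
      (isRadical_iff_span_singleton.mp hsep.squarefree.isRadical)
  set rt : Q := AdjoinRoot.root P with hrt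
  have hrtn : rt ^ n = 1 := by
    have h0 : Polynomial.aeval rt ((X : Polynomial F) ^ n - 1) = 0 := by
      rw [AdjoinRoot.aeval_eq]; exact AdjoinRoot.mk_self
    simp only [map_sub, map_pow, aeval_X, map_one] at h0
    exact sub_eq_zero.mp h0
  have hrtmod : ∀ k : ℕ, rt ^ k = rt ^ (k % n) := by
    intro k
    conv_lhs => rw [← Nat.mod_add_div k n]
    rw [pow_add, pow_mul, hrtn, one_pow, mul_one]
  -- the linear map ι
  set ι : (ZMod n → F) →ₗ[F] Q :=
    { toFun := fun x => ∑ i : ZMod n, x i • rt ^ (i.val)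
      map_add' := by intro x y; simp [add_smul, Finset.sum_add_distrib]
      map_smul' := by intro c x; simp [mul_smul, Finset.smul_sum] } with hι
  have hιapp : ∀ x : ZMod n → F, ι x = ∑ i : ZMod n, x i • rt ^ (i.val) := fun _ => rfl
  have hιδ : ∀ u : ZMod n, ι (fun j => if j = u then 1 else 0) = rt ^ u.val := by
    intro u
    rw [hιapp]
    rw [Finset.sum_eq_single u]
    · simp
    · intro i _ hi; simp [hi]
    · intro h; exact absurd (Finset.mem_univ u) h
  -- sums over ZMod n indexed by val
  have hval_sum : ∀ h : ℕ → Q, ∑ i : ZMod n, h i.val = ∑ k ∈ Finset.range n, h k := by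
    intro h
    apply Finset.sum_nbij' (fun i : ZMod n => i.val) (fun k : ℕ => (k : ZMod n))
    · intro i _; exact Finset.mem_range.mpr (ZMod.val_lt i)
    · intro k _; exact Finset.mem_univ _
    · intro i _; exact ZMod.natCast_rightInverse i
    · intro k hk; exact (ZMod.val_natCast n k).trans (Nat.mod_eq_of_lt (Finset.mem_range.mp hk))
    · intro i _; rfl
  have hι1 : ι (fun _ => 1) = AdjoinRoot.mk P g := by
    rw [hιapp]
    simp only [one_smul]
    rw [hval_sum (fun k => rt ^ k), ← AdjoinRoot.aeval_eq]
    simp [hgdef, hrt]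

  -- matrix side
  set E : Matrix (ZMod n) (ZMod n) F :=
    Matrix.circulant (fun j : ZMod n => if j = 1 then (1 : F) else 0) with hE
  have hcirc0 : Matrix.circulant (fun j : ZMod n => if j = 0 then (1 : F) else 0) = 1 := by
    ext i j
    rw [Matrix.circulant_apply, Matrix.one_apply]
    simp [sub_eq_zero]
  have hEk : ∀ k : ℕ,
      E ^ k = Matrix.circulant (fun j : ZMod n => if j = (k : ZMod n) then 1 else 0) := by
    intro k
    induction k with
    | zero => rw [pow_zero]; rw [show ((0 : ℕ) : ZMod n) = 0 by norm_cast]; exact hcirc0.symm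
    | succ k ih =>
      rw [pow_succ, ih, hE, Matrix.circulant_mul, Matrix.circulant_inj]
      funext i
      rw [show (Matrix.circulant (fun j : ZMod n => if j = (k : ZMod n) then (1:F) else 0) *ᵥ
        (fun j : ZMod n => if j = 1 then (1 : F) else 0)) i
        = ∑ j : ZMod n, (if i - j = (k : ZMod n) then (1:F) else 0) * (if j = 1 then 1 else 0)
        from rfl]
      rw [Finset.sum_eq_single (1 : ZMod n)]
      · have : ((k + 1 : ℕ) : ZMod n) = (k : ZMod n) + 1 := by push_cast; ring
        rw [this]
        simp [sub_eq_iff_eq_add]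
      · intro j _ hj; simp [hj]
      · intro h; exact absurd (Finset.mem_univ _) h
  have hEaeval : Polynomial.aeval E ((X : Polynomial F) ^ n - 1) = 0 := by
    simp only [map_sub, map_pow, aeval_X, map_one]
    rw [hEk n, show ((n : ℕ) : ZMod n) = 0 from ZMod.natCast_self n, hcirc0, sub_self]
  have hkerE : ∀ Z ∈ Ideal.span ({P} : Set (Polynomial F)),
      (Polynomial.aeval E).toRingHom Z = 0 := by
    intro Z hZ
    obtain ⟨c, hc⟩ := Ideal.mem_span_singleton'.mp hZ
    have : Polynomial.aeval E Z = Polynomial.aeval E c * Polynomial.aeval E P := by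
      rw [← map_mul, ← hc]
    show Polynomial.aeval E Z = 0
    rw [this, show Polynomial.aeval E P = 0 from hEaeval, mul_zero]
  set psi : Q →+* Matrix (ZMod n) (ZMod n) F :=
    Ideal.Quotient.lift (Ideal.span ({P} : Set (Polynomial F)))
      (Polynomial.aeval E).toRingHom hkerE with hpsi
  have hpsimk : ∀ Z : Polynomial F, psi (AdjoinRoot.mk P Z) = Polynomial.aeval E Z := by
    intro Z; rfl
  have hvalcast : ∀ i : ZMod n, ((i.val : ℕ) : ZMod n) = i := fun i => ZMod.natCast_rightInverse i
  have hsumcirc : ∀ v : ZMod n → F,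
      (∑ i : ZMod n, v i • Matrix.circulant (fun j : ZMod n => if j = i then (1:F) else 0))
        = Matrix.circulant v := by
    intro v
    ext r c
    rw [Matrix.sum_apply]
    simp only [Matrix.smul_apply, Matrix.circulant_apply, smul_eq_mul, mul_ite, mul_one, mul_zero]
    rw [Finset.sum_eq_single (r - c)]
    · simp
    · intro i _ hi; exact if_neg fun h => hi h.symm
    · intro h; exact absurd (Finset.mem_univ _) h
  have haevalC : ∀ v : ZMod n → F,
      Polynomial.aeval E (∑ i : ZMod n, C (v i) * X ^ (i.val)) = Matrix.circulant v := by
    intro v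
    have haux : ∀ i : ZMod n, Polynomial.aeval E (C (v i) * X ^ (i.val))
        = v i • Matrix.circulant (fun j : ZMod n => if j = i then (1:F) else 0) := by
      intro i
      rw [map_mul, aeval_C, map_pow, aeval_X, hEk i.val, hvalcast i, ← Algebra.smul_def]
    rw [map_sum, Finset.sum_congr rfl fun i _ => haux i, hsumcirc]
  have hιmk : ∀ x : ZMod n → F,
      ι x = AdjoinRoot.mk P (∑ i : ZMod n, C (x i) * X ^ (i.val)) := by
    intro x
    rw [hιapp, map_sum]
    apply Finset.sum_congr rfl
    intro i _
    rw [map_mul, AdjoinRoot.mk_C, map_pow, AdjoinRoot.mk_X, Algebra.smul_def]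
    rfl
  have hψι : ∀ x : ZMod n → F, psi (ι x) = Matrix.circulant x := by
    intro x
    rw [hιmk, hpsimk, haevalC]
  set e0v : ZMod n → F := fun j => if j = 0 then 1 else 0 with he0v
  set θ : Q → (ZMod n → F) := fun c => (psi c).mulVec e0v with hθ
  have hce0 : ∀ v : ZMod n → F, Matrix.circulant v *ᵥ e0v = v := by
    intro v
    funext i
    rw [show (Matrix.circulant v *ᵥ e0v) i
      = ∑ j : ZMod n, v (i - j) * (if j = 0 then (1:F) else 0) from rfl]
    rw [Finset.sum_eq_single (0 : ZMod n)]
    · simp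
    · intro j _ hj; simp [hj]
    · intro h; exact absurd (Finset.mem_univ _) h
  have hθι : ∀ x : ZMod n → F, θ (ι x) = x := by
    intro x; rw [hθ]; simp only [hψι x]; exact hce0 x
  -- A = psi a
  set a : Q := AdjoinRoot.mk P (B * ((X : Polynomial F) ^ (n-1) - 1)) with ha
  have hAψ : A = psi a := by
    rw [ha, hpsimk, map_mul, map_sub, map_pow, aeval_X, map_one, hA]
    congr 1
    · rw [hB, haevalC]
    · congr 1
      rw [hEk (n-1)]
      congr 1
      funext j
      congr 1
      rw [show ((n - 1 : ℕ) : ZMod n) = -1 by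
        rw [Nat.cast_sub hn1]; simp]
  have hTk : ∀ (k : ℕ) (x : ZMod n → F),
      (fun y : ZMod n → F => A.mulVec y)^[k] x = θ (a ^ k * ι x) := by
    intro k x
    induction k with
    | zero => simp [hθι]
    | succ k ih =>
      rw [Function.iterate_succ_apply', ih]
      show A *ᵥ ((psi (a ^ k * ι x)) *ᵥ e0v) = θ (a ^ (k+1) * ι x)
      rw [hAψ, Matrix.mulVec_mulVec, ← map_mul]
      rw [show a * (a ^ k * ι x) = a ^ (k+1) * ι x from by ring]
  -- surjectivity of ι
  have hι_surj : Function.Surjective ι := by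
    intro z
    obtain ⟨Z, rfl⟩ := AdjoinRoot.mk_surjective z
    induction Z using Polynomial.induction_on' with
    | add pp qq hpp hqq =>
      obtain ⟨x1, hx1⟩ := hpp
      obtain ⟨x2, hx2⟩ := hqq
      exact ⟨x1 + x2, by rw [map_add, hx1, hx2, map_add]⟩
    | monomial k c =>
      refine ⟨c • (fun j : ZMod n => if j = ((k : ℕ) : ZMod n) then (1:F) else 0), ?_⟩
      rw [map_smul, hιδ, ZMod.val_natCast, ← hrtmod k]
      rw [← Polynomial.C_mul_X_pow_eq_monomial, map_mul, AdjoinRoot.mk_C, map_pow,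
        AdjoinRoot.mk_X, Algebra.smul_def]
      rfl
  have hθinj : Function.Injective θ := by
    intro z1 z2 h
    obtain ⟨x1, rfl⟩ := hι_surj z1
    obtain ⟨x2, rfl⟩ := hι_surj z2
    rw [hθι, hθι] at h
    rw [h]
  haveI : Finite Q := Finite.of_surjective (fun x : ZMod n → F => ι x) hι_surj

  -- evaluation at 1
  have hone : Polynomial.aeval (1 : F) P = 0 := by
    show Polynomial.aeval (1 : F) ((X : Polynomial F) ^ n - 1) = 0
    simp
  have hker1 : ∀ Z ∈ Ideal.span ({P} : Set (Polynomial F)),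
      (Polynomial.aeval (1 : F)).toRingHom Z = 0 := by
    intro Z hZ
    obtain ⟨c, hc⟩ := Ideal.mem_span_singleton'.mp hZ
    show Polynomial.aeval (1 : F) Z = 0
    rw [← hc, map_mul, show Polynomial.aeval (1 : F) P = 0 from hone, mul_zero]
  set ev1 : Q →+* F := Ideal.Quotient.lift (Ideal.span ({P} : Set (Polynomial F)))
    (Polynomial.aeval (1 : F)).toRingHom hker1 with hev1
  have hev1mk : ∀ Z : Polynomial F, ev1 (AdjoinRoot.mk P Z) = Polynomial.aeval (1 : F) Z := by
    intro Z; rfl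
  have hev1a : ev1 a = 0 := by
    rw [ha, hev1mk, map_mul]
    have : Polynomial.aeval (1 : F) ((X : Polynomial F) ^ (n-1) - 1) = 0 := by simp
    rw [this, mul_zero]
  set gbar : Q := AdjoinRoot.mk P g with hgbar
  have hev1g : ev1 gbar = (n : F) := by
    rw [hgbar, hev1mk, hgdef]
    simp
  -- the key multiplication rule for gbar
  have hgr1 : gbar * rt = gbar := by
    rw [show gbar * rt = AdjoinRoot.mk P (g * X) from by rw [map_mul, AdjoinRoot.mk_X]]
    rw [hgbar]
    refine (AdjoinRoot.mk_eq_mk).mpr ?_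
    refine ⟨1, ?_⟩
    have : g * ((X : Polynomial F) - 1) = P := hgP
    linear_combination this
  have hgrk : ∀ k : ℕ, gbar * rt ^ k = gbar := by
    intro k
    induction k with
    | zero => rw [pow_zero, mul_one]
    | succ k ih => rw [pow_succ, ← mul_assoc, ih, hgr1]
  have Lg : ∀ z : Q, gbar * z = ev1 z • gbar := by
    intro z
    obtain ⟨Z, rfl⟩ := AdjoinRoot.mk_surjective z
    induction Z using Polynomial.induction_on' with
    | add pp qq hpp hqq => rw [map_add, mul_add, hpp, hqq, map_add, add_smul]
    | monomial k c =>
      have h1 : (AdjoinRoot.mk P) (C c * X ^ k) = (algebraMap F Q c) * rt ^ k := by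
        rw [map_mul, AdjoinRoot.mk_C, map_pow, AdjoinRoot.mk_X]; rfl
      have h2 : ev1 ((AdjoinRoot.mk P) (C c * X ^ k)) = c := by rw [hev1mk]; simp
      rw [← Polynomial.C_mul_X_pow_eq_monomial, h2, h1, mul_left_comm, hgrk k,
        ← Algebra.smul_def]
  set eps : Q := (1 : Q) - (n : F)⁻¹ • gbar with heps
  have heps_mul : ∀ z : Q, ev1 z = 0 → eps * z = z := by
    intro z hz
    rw [heps, sub_mul, one_mul, smul_mul_assoc, Lg z, hz, zero_smul, smul_zero, sub_zero]
  have heps_g : eps * gbar = 0 := by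
    rw [heps, sub_mul, one_mul, smul_mul_assoc, Lg gbar, hev1g, smul_smul,
      inv_mul_cancel₀ hnF, one_smul, sub_self]
  -- facts about the multiplicative function f
  obtain ⟨hf0, ⟨a0, ha0, hfa0⟩, hmul⟩ := hf
  have h1ne : (1 : ZMod n) ≠ 0 := one_ne_zero
  have hf1 : f 1 = 1 := by
    have h11 : f 1 * f 1 = f 1 := by rw [← hmul 1 1 h1ne h1ne, one_mul]
    have hf1ne : f 1 ≠ 0 := by
      intro h
      apply hfa0
      have := hmul a0 1 ha0 h1ne
      rw [mul_one] at this
      rw [this, h, mul_zero]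
    calc f 1 = f 1 * f 1 * (f 1)⁻¹ := by field_simp
    _ = f 1 * (f 1)⁻¹ := by rw [h11]
    _ = 1 := mul_inv_cancel₀ hf1ne
  have hfne : ∀ x : ZMod n, x ≠ 0 → f x ≠ 0 := by
    intro x hx
    have := hmul x x⁻¹ hx (inv_ne_zero hx)
    rw [mul_inv_cancel₀ hx, hf1] at this
    exact left_ne_zero_of_mul_eq_one this.symm
  have hm1ne : (-1 : ZMod n) ≠ 0 := neg_ne_zero.mpr one_ne_zero
  have hfm1sq : f (-1) * f (-1) = 1 := by
    have := hmul (-1) (-1) hm1ne hm1ne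
    rw [neg_mul_neg, one_mul, hf1] at this
    exact this.symm
  have hfm1ne : f (-1) ≠ 0 := hfne _ hm1ne
  have h0m1 : (0 : ZMod n) ≠ -1 := fun h => hm1ne h.symm
  -- character sum is zero
  have hS : ∑ i : ZMod n, f i = 0 := by
    obtain ⟨c, hc, hfc⟩ := hnt
    have hmul' : ∀ i : ZMod n, f (c * i) = f c * f i := by
      intro i
      by_cases hi : i = 0
      · rw [hi, mul_zero, hf0, mul_zero]
      · exact hmul c i hc hi
    have hre : ∑ i : ZMod n, f (c * i) = ∑ i : ZMod n, f i := by
      have := Equiv.sum_comp (Equiv.mulLeft₀ c hc) f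
      simpa using this
    have h2 : f c * ∑ i : ZMod n, f i = ∑ i : ZMod n, f i := by
      rw [Finset.mul_sum, Finset.sum_congr rfl fun i _ => (hmul' i).symm, hre]
    have h3 : (f c - 1) * ∑ i : ZMod n, f i = 0 := by linear_combination h2
    rcases mul_eq_zero.mp h3 with h | h
    · exact absurd (by linear_combination h) hfc
    · exact h
  -- the convolution identity
  set f' : ZMod n → F := fun j => f j⁻¹ with hf'
  have step1 : (ι f) * (ι f') = ∑ i : ZMod n, ∑ j : ZMod n, (f i * f' j) • rt ^ ((i + j).val) := by
    rw [hιapp f, hιapp f', Finset.sum_mul_sum]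
    apply Finset.sum_congr rfl; intro i _
    apply Finset.sum_congr rfl; intro j _
    rw [smul_mul_smul_comm, ← pow_add, hrtmod (i.val + j.val), ← ZMod.val_add]
  have step2 : ∀ i : ZMod n, ∑ j : ZMod n, (f i * f' j) • rt ^ ((i + j).val)
      = ∑ k : ZMod n, (f i * f' (k - i)) • rt ^ (k.val) := by
    intro i
    refine Fintype.sum_equiv (Equiv.addLeft i) _ _ ?_
    intro j
    simp [add_sub_cancel_left]
  have step3 : (ι f) * (ι f')
      = ∑ k : ZMod n, (∑ i : ZMod n, f i * f' (k - i)) • rt ^ (k.val) := by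
    rw [step1, Finset.sum_congr rfl fun i _ => step2 i, Finset.sum_comm]
    apply Finset.sum_congr rfl
    intro k _
    rw [Finset.sum_smul]
  have hw0 : (∑ i : ZMod n, f i * f' (0 - i)) = f (-1) * ((n:F) - 1) := by
    have hterm : ∀ i : ZMod n, f i * f' (0 - i) = if i = 0 then 0 else f (-1) := by
      intro i
      by_cases hi : i = 0
      · simp [hi, hf0, hf']
      · rw [if_neg hi, hf']
        have hni : (-i : ZMod n) ≠ 0 := neg_ne_zero.mpr hi
        show f i * f ((0 - i)⁻¹) = f (-1)
        rw [zero_sub, ← hmul i (-i)⁻¹ hi (inv_ne_zero hni)]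
        congr 1
        rw [inv_neg, mul_neg, mul_inv_cancel₀ hi]
    rw [Finset.sum_congr rfl fun i _ => hterm i]
    have hsw : ∀ i : ZMod n, (if i = 0 then (0:F) else f (-1))
        = f (-1) - (if i = 0 then f (-1) else 0) := by
      intro i; by_cases hi : i = 0 <;> simp [hi]
    rw [Finset.sum_congr rfl fun i _ => hsw i, Finset.sum_sub_distrib, Finset.sum_const,
      Finset.sum_ite_eq' Finset.univ (0 : ZMod n) (fun _ => f (-1))]
    simp only [Finset.mem_univ, if_pos, Finset.card_univ, ZMod.card, nsmul_eq_mul]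
    ring
  have hwk : ∀ k : ZMod n, k ≠ 0 → (∑ i : ZMod n, f i * f' (k - i)) = - f (-1) := by
    intro k hk
    have hterm : ∀ i : ZMod n, f i * f' (k - i) = f (i * (k - i)⁻¹) := by
      intro i
      by_cases hi : i = 0
      · simp [hi, hf0]
      · by_cases hik : i = k
        · rw [hik, sub_self, hf']
          show f k * f ((0:ZMod n)⁻¹) = f (k * (0 : ZMod n)⁻¹)
          rw [inv_zero, mul_zero, hf0, mul_zero]
        · have hki : k - i ≠ 0 := sub_ne_zero.mpr (Ne.symm hik)
          rw [hf']
          exact (hmul i (k - i)⁻¹ hi (inv_ne_zero hki)).symm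
    rw [Finset.sum_congr rfl fun i _ => hterm i]
    have hsub : ({0, k} : Finset (ZMod n)) ⊆ Finset.univ := Finset.subset_univ _
    rw [← Finset.sum_sdiff hsub]
    have hpair : ∑ i ∈ ({0, k} : Finset (ZMod n)), f (i * (k - i)⁻¹) = 0 := by
      rw [Finset.sum_pair (Ne.symm hk)]
      simp [hf0, sub_self, inv_zero]
    rw [hpair, add_zero]
    have hbij : ∑ i ∈ Finset.univ \ ({0, k} : Finset (ZMod n)), f (i * (k - i)⁻¹)
        = ∑ u ∈ Finset.univ \ ({0, -1} : Finset (ZMod n)), f u := by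
      apply Finset.sum_nbij' (fun i : ZMod n => i * (k - i)⁻¹)
        (fun u : ZMod n => k * u * (1 + u)⁻¹)
      · intro i hi
        simp only [Finset.mem_sdiff, Finset.mem_univ, Finset.mem_insert,
          Finset.mem_singleton, true_and, not_or] at hi ⊢
        obtain ⟨hi0, hik⟩ := hi
        have hki : k - i ≠ 0 := sub_ne_zero.mpr (Ne.symm hik)
        constructor
        · exact mul_ne_zero hi0 (inv_ne_zero hki)
        · intro h
          apply hk
          have h' : i * (k - i)⁻¹ * (k - i) = -1 * (k - i) := by rw [h]
          rw [mul_assoc, inv_mul_cancel₀ hki, mul_one] at h'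
          linear_combination h' 
      · intro u hu
        simp only [Finset.mem_sdiff, Finset.mem_univ, Finset.mem_insert,
          Finset.mem_singleton, true_and, not_or] at hu ⊢
        obtain ⟨hu0, hum1⟩ := hu
        have h1u : (1 + u : ZMod n) ≠ 0 := by
          intro h
          apply hum1
          linear_combination h
        constructor
        · exact mul_ne_zero (mul_ne_zero hk hu0) (inv_ne_zero h1u)
        · intro h
          have h' : k * u * (1 + u)⁻¹ * (1 + u) = k * (1 + u) := by rw [h]
          rw [mul_assoc, inv_mul_cancel₀ h1u, mul_one] at h'
          exact hk (by linear_combination - h')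
      · intro i hi
        simp only [Finset.mem_sdiff, Finset.mem_univ, Finset.mem_insert,
          Finset.mem_singleton, true_and, not_or] at hi
        obtain ⟨hi0, hik⟩ := hi
        have hki : k - i ≠ 0 := sub_ne_zero.mpr (Ne.symm hik)
        have haux : i * (k - i)⁻¹ * (k - i) = i := by
          rw [mul_assoc, inv_mul_cancel₀ hki, mul_one]
        have e : 1 + i * (k - i)⁻¹ = k * (k - i)⁻¹ := by
          apply mul_right_cancel₀ hki
          rw [add_mul, one_mul, haux, mul_assoc, inv_mul_cancel₀ hki, mul_one]
          ring
        rw [e, mul_inv, inv_inv]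
        rw [show k * (i * (k - i)⁻¹) * (k⁻¹ * (k - i)) = i * (k * k⁻¹) * ((k - i)⁻¹ * (k - i))
          from by ring, mul_inv_cancel₀ hk, inv_mul_cancel₀ hki, mul_one, mul_one]
      · intro u hu
        simp only [Finset.mem_sdiff, Finset.mem_univ, Finset.mem_insert,
          Finset.mem_singleton, true_and, not_or] at hu
        obtain ⟨hu0, hum1⟩ := hu
        have h1u : (1 + u : ZMod n) ≠ 0 := by
          intro h; apply hum1; linear_combination h
        have haux : k * u * (1 + u)⁻¹ * (1 + u) = k * u := by
          rw [mul_assoc, inv_mul_cancel₀ h1u, mul_one]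
        have e2 : k - k * u * (1 + u)⁻¹ = k * (1 + u)⁻¹ := by
          apply mul_right_cancel₀ h1u
          rw [sub_mul, haux, mul_assoc, inv_mul_cancel₀ h1u, mul_one]
          ring
        rw [e2, mul_inv, inv_inv]
        rw [show k * u * (1 + u)⁻¹ * (k⁻¹ * (1 + u)) = u * (k * k⁻¹) * ((1 + u)⁻¹ * (1 + u))
          from by ring, mul_inv_cancel₀ hk, inv_mul_cancel₀ h1u, mul_one, mul_one]
      · intro i _; rfl
    rw [hbij]
    have hfin : ∑ u ∈ Finset.univ \ ({0, -1} : Finset (ZMod n)), f u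
        = (∑ u : ZMod n, f u) - (f 0 + f (-1)) := by
      rw [Finset.sum_sdiff_eq_sub (Finset.subset_univ _), Finset.sum_pair h0m1]
    rw [hfin, hS, hf0]
    ring
  have hweq : (fun k : ZMod n => ∑ i : ZMod n, f i * f' (k - i))
      = f (-1) • ((n:F) • e0v - (fun _ : ZMod n => (1:F))) := by
    funext k
    by_cases hk : k = 0
    · rw [hk, hw0]
      simp [he0v]
      try ring
    · rw [hwk k hk]
      simp [he0v, hk]
      try ring
  have hιe0 : ι e0v = 1 := by
    rw [he0v, hιδ 0, ZMod.val_zero, pow_zero]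
  have hconv : (ι f) * (ι f') = f (-1) • ((n:F) • (1:Q) - gbar) := by
    rw [step3, show (∑ k : ZMod n, (∑ i : ZMod n, f i * f' (k - i)) • rt ^ (k.val))
      = ι (fun k : ZMod n => ∑ i : ZMod n, f i * f' (k - i)) from (hιapp _).symm]
    rw [hweq, map_smul, map_sub, map_smul, hιe0, hι1, hgbar]

  have hev1f : ev1 (ι f) = 0 := by
    rw [hιmk, hev1mk, map_sum]
    have hterm : ∀ i : ZMod n, Polynomial.aeval (1:F) (C (f i) * X ^ (i.val)) = f i := by
      intro i; simp
    rw [Finset.sum_congr rfl fun i _ => hterm i, hS]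
  have hNg : (n:F) • (1:Q) - gbar = f (-1) • ((ι f) * (ι f')) := by
    rw [hconv, smul_smul, hfm1sq, one_smul]
  have hJf : ∀ z : Q, ev1 z = 0 → ∃ r : Q, z = (ι f) * r := by
    intro z hz
    have h1 : ((n:F) • (1:Q) - gbar) * z = (n:F) • z := by
      rw [sub_mul, smul_mul_assoc, one_mul, Lg z, hz, zero_smul, sub_zero]
    refine ⟨(n:F)⁻¹ • (f (-1) • ((ι f') * z)), ?_⟩
    have h2 : (ι f) * ((n:F)⁻¹ • (f (-1) • ((ι f') * z)))
        = (n:F)⁻¹ • ((f (-1) • ((ι f) * (ι f'))) * z) := by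
      simp only [mul_smul_comm, smul_mul_assoc, mul_assoc]
    rw [h2, ← hNg, h1, smul_smul, inv_mul_cancel₀ hnF, one_smul]
  -- dynamics
  obtain ⟨t0, ht0, hat0⟩ := exists_pow_fix' a
  have hat0' : ∀ z : Q, a ^ (1 + t0) * z = a ^ 1 * z := fun z => by rw [hat0, pow_one]
  have pc : ∀ {i j : ℕ}, i = j → ∀ z : Q, a ^ i * z = a ^ j * z := fun h z => by rw [h]
  set T : (ZMod n → F) → (ZMod n → F) := fun y : ZMod n → F => A.mulVec y with hTdef
  have hiter : ∀ (s t : ℕ) (x : ZMod n → F),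
      (T^[s + t] x = T^[s] x) ↔ a ^ (s + t) * ι x = a ^ s * ι x := by
    intro s t x
    rw [hTdef, hTk, hTk]
    exact ⟨fun h => hθinj h, fun h => by rw [h]⟩
  have hper_le : ∀ x : ZMod n → F, orbitPeriod T x ≤ orbitPeriod T f := by
    intro x
    have hne : {t | 1 ≤ t ∧ ∃ s, T^[s + t] f = T^[s] f}.Nonempty :=
      ⟨t0, ht0, 1, (hiter 1 t0 f).mpr (hat0' (ι f))⟩
    have hmem := Nat.sInf_mem hne
    obtain ⟨ht1, s, hs⟩ := hmem
    have hsInf : orbitPeriod T f = sInf {t | 1 ≤ t ∧ ∃ s, T^[s + t] f = T^[s] f} := rfl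
    rw [← hsInf] at hs ht1
    rw [hiter] at hs
    have hz : ev1 (a * ι x) = 0 := by rw [map_mul, hev1a, zero_mul]
    obtain ⟨r, hr⟩ := hJf _ hz
    have hx : a ^ ((s+1) + orbitPeriod T f) * ι x = a ^ (s+1) * ι x := by
      have e1 : a ^ ((s+1) + orbitPeriod T f) * ι x
          = a ^ (s + orbitPeriod T f) * (a * ι x) := by
        rw [← mul_assoc, ← pow_succ]
        exact pc (by omega) (ι x)
      have e2 : a ^ (s+1) * ι x = a ^ s * (a * ι x) := by
        rw [← mul_assoc, ← pow_succ]
      rw [e1, e2, hr, ← mul_assoc, ← mul_assoc, hs]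
    exact Nat.sInf_le ⟨ht1, s + 1, (hiter (s+1) (orbitPeriod T f) x).mpr hx⟩
  have hperf_max : orbitPeriod T f = Finset.univ.sup (fun y : ZMod n → F => orbitPeriod T y) :=
    le_antisymm (Finset.le_sup (Finset.mem_univ f)) (Finset.sup_le fun x _ => hper_le x)
  have hpre_le : ∀ x : ZMod n → F, orbitPreperiod T x ≤ 1 := fun x =>
    Nat.sInf_le ⟨t0, ht0, (hiter 1 t0 x).mpr (hat0' (ι x))⟩
  have hpre_eq_one : ∀ x : ZMod n → F,
      (¬ ∃ t, 1 ≤ t ∧ a ^ t * ι x = ι x) → orbitPreperiod T x = 1 := by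
    intro x hnex
    have h0 : 0 ∉ {s | ∃ t, 1 ≤ t ∧ T^[s + t] x = T^[s] x} := by
      rintro ⟨t, ht, hx⟩
      apply hnex
      refine ⟨t, ht, ?_⟩
      have h2 := (hiter 0 t x).mp hx
      simpa using h2
    have hmem1 : 1 ∈ {s | ∃ t, 1 ≤ t ∧ T^[s + t] x = T^[s] x} :=
      ⟨t0, ht0, (hiter 1 t0 x).mpr (hat0' (ι x))⟩
    have hle : orbitPreperiod T x ≤ 1 := Nat.sInf_le hmem1
    have hne0 : orbitPreperiod T x ≠ 0 := by
      intro h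
      have hmm := Nat.sInf_mem (⟨1, hmem1⟩ : Set.Nonempty {s | ∃ t, 1 ≤ t ∧ T^[s + t] x = T^[s] x})
      have : orbitPreperiod T x ∈ {s | ∃ t, 1 ≤ t ∧ T^[s + t] x = T^[s] x} := hmm
      rw [h] at this
      exact h0 this
    omega
  have hpre_eq_zero : ∀ x : ZMod n → F,
      (∃ t, 1 ≤ t ∧ a ^ t * ι x = ι x) → orbitPreperiod T x = 0 := by
    rintro x ⟨t, ht, hx⟩
    refine Nat.le_zero.mp (Nat.sInf_le ⟨t, ht, ?_⟩)
    refine (hiter 0 t x).mpr ?_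
    simpa using hx
  have hnex0 : ¬ ∃ t, 1 ≤ t ∧ a ^ t * ι e0v = ι e0v := by
    rintro ⟨t, ht, hx⟩
    rw [hιe0, mul_one] at hx
    have h2 := congrArg ev1 hx
    rw [map_pow, hev1a, map_one, zero_pow (by omega : t ≠ 0)] at h2
    exact zero_ne_one h2
  have hpremax : Finset.univ.sup (fun y : ZMod n → F => orbitPreperiod T y) = 1 := by
    refine le_antisymm (Finset.sup_le fun x _ => hpre_le x) ?_
    rw [← hpre_eq_one e0v hnex0]
    exact Finset.le_sup (Finset.mem_univ e0v)
  have hMC : MostComplicated T f ↔ ¬ ∃ t, 1 ≤ t ∧ a ^ t * ι f = ι f := by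
    constructor
    · rintro ⟨hper, hpre⟩ hex
      rw [hpre_eq_zero f hex, hpremax] at hpre
      exact one_ne_zero hpre.symm
    · intro hnex
      exact ⟨hperf_max, by rw [hpremax, hpre_eq_one f hnex]⟩
  -- the final equivalence with coprimality
  have hfinal : (∃ t, 1 ≤ t ∧ a ^ t * ι f = ι f) ↔ IsCoprime B g := by
    constructor
    · rintro ⟨t, ht, hteq⟩
      by_contra hncop
      have hgeval : Polynomial.eval (1:F) g = (n:F) := by rw [hgdef]; simp
      have hg0 : g ≠ 0 := by
        intro h
        rw [h, Polynomial.eval_zero] at hgeval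
        exact hnF hgeval.symm
      have hnu : ¬ IsUnit (EuclideanDomain.gcd B g) :=
        fun hu => hncop (EuclideanDomain.gcd_isUnit_iff.mp hu)
      have hgcd0 : EuclideanDomain.gcd B g ≠ 0 := by
        intro h0
        exact hg0 ((EuclideanDomain.gcd_eq_zero_iff.mp h0).2)
      obtain ⟨w, hwirr, hwdvd⟩ := WfDvdMonoid.exists_irreducible_factor hnu hgcd0
      have hdB : w ∣ B := hwdvd.trans (EuclideanDomain.gcd_dvd_left B g)
      have hdg : w ∣ g := hwdvd.trans (EuclideanDomain.gcd_dvd_right B g)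
      have hdP : w ∣ P := hdg.trans ⟨X - 1, hgP.symm⟩
      haveI : Fact (Irreducible w) := ⟨hwirr⟩
      have hkerw : ∀ Z ∈ Ideal.span ({P} : Set (Polynomial F)), (AdjoinRoot.mk w) Z = 0 := by
        intro Z hZ
        obtain ⟨c, hc⟩ := Ideal.mem_span_singleton'.mp hZ
        rw [AdjoinRoot.mk_eq_zero, ← hc]
        exact Dvd.dvd.mul_left hdP c
      set χ : Q →+* AdjoinRoot w :=
        Ideal.Quotient.lift (Ideal.span ({P} : Set (Polynomial F))) (AdjoinRoot.mk w) hkerw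
        with hχdef
      have hχmk : ∀ Z : Polynomial F, χ (AdjoinRoot.mk P Z) = AdjoinRoot.mk w Z := fun Z => rfl
      have hχa : χ a = 0 := by
        rw [ha, hχmk]
        exact AdjoinRoot.mk_eq_zero.mpr (dvd_mul_of_dvd_left hdB _)
      have hχg : χ gbar = 0 := by
        rw [hgbar, hχmk]
        exact AdjoinRoot.mk_eq_zero.mpr hdg
      have hχsmul : ∀ (c : F) (z : Q), χ (c • z) = algebraMap F (AdjoinRoot w) c * χ z := by
        intro c z
        obtain ⟨Z, rfl⟩ := AdjoinRoot.mk_surjective z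
        have h1 : c • (AdjoinRoot.mk P Z) = AdjoinRoot.mk P (C c * Z) := by
          rw [map_mul, AdjoinRoot.mk_C, Algebra.smul_def]; rfl
        rw [h1, hχmk, map_mul, AdjoinRoot.mk_C]
        rfl
      have hχf : χ (ι f) = 0 := by
        have h2 := congrArg χ hteq
        rw [map_mul, map_pow, hχa, zero_pow (by omega : t ≠ 0), zero_mul] at h2
        exact h2.symm
      have hK := congrArg χ hconv
      rw [map_mul, hχf, zero_mul, hχsmul, map_sub, hχsmul, map_one, mul_one, hχg, sub_zero] at hK
      have hzero : algebraMap F (AdjoinRoot w) (f (-1) * (n:F)) = 0 := by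
        rw [map_mul, ← hK]
      have hinj : Function.Injective (algebraMap F (AdjoinRoot w)) :=
        (algebraMap F (AdjoinRoot w)).injective
      exact (mul_ne_zero hfm1ne hnF) (hinj (by rw [hzero, map_zero]))
    · intro hcop
      have hcop2 : IsCoprime ((X : Polynomial F) - 1) g := by
        obtain ⟨qq, hqq⟩ := @Polynomial.X_sub_C_dvd_sub_C_eval F 1 _ g
        have hgeval : Polynomial.eval (1:F) g = (n:F) := by rw [hgdef]; simp
        rw [hgeval] at hqq
        refine ⟨- C ((n:F)⁻¹) * qq, C ((n:F)⁻¹), ?_⟩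
        have hCn : C ((n:F)⁻¹) * C ((n:F)) = 1 := by
          rw [← C_mul, inv_mul_cancel₀ hnF, map_one]
        calc (- C ((n:F)⁻¹) * qq) * ((X:Polynomial F) - 1) + C ((n:F)⁻¹) * g
            = C ((n:F)⁻¹) * (g - ((X : Polynomial F) - C 1) * qq) := by rw [map_one]; ring
          _ = C ((n:F)⁻¹) * C ((n:F)) := by rw [← hqq]; ring
          _ = 1 := hCn
      have hcop3 : IsCoprime (g - 1) g := ⟨-1, 1, by ring⟩
      have hkey : (X : Polynomial F) * ((X:Polynomial F)^(n-1) - 1)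
          = ((X:Polynomial F) - 1) * (g - 1) := by
        have h1 : (X : Polynomial F) * (X:Polynomial F)^(n-1) = (X:Polynomial F)^n := by
          rw [← pow_succ']
          congr 1
          omega
        rw [mul_sub, mul_one, h1]
        have hgP' : g * ((X:Polynomial F) - 1) = (X:Polynomial F)^n - 1 := hgP
        linear_combination -hgP'
      have hcop4 : IsCoprime ((X:Polynomial F)^(n-1) - 1) g := by
        have h2 := hcop2.mul_left hcop3
        rw [← hkey] at h2
        exact h2.of_mul_left_right
      have hcopP : IsCoprime (B * ((X:Polynomial F)^(n-1) - 1)) g := hcop.mul_left hcop4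
      obtain ⟨u, v, huv⟩ := hcopP
      have h1 : AdjoinRoot.mk P u * a + AdjoinRoot.mk P v * gbar = 1 := by
        rw [ha, hgbar, ← map_mul, ← map_mul, ← map_add, huv, map_one]
      refine ⟨t0, ht0, ?_⟩
      have hat0'' : a ^ (t0 + 1) = a := by
        rw [show t0 + 1 = 1 + t0 from by omega]
        exact hat0
      have hzev : ev1 (a ^ t0 * ι f - ι f) = 0 := by
        rw [map_sub, map_mul, map_pow, hev1a, hev1f]
        simp
      have haz : a * (a ^ t0 * ι f - ι f) = 0 := by
        rw [mul_sub, ← mul_assoc, ← pow_succ', hat0'', sub_self]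
      have hepsz : eps * (a ^ t0 * ι f - ι f) = a ^ t0 * ι f - ι f := heps_mul _ hzev
      have hepsa : (eps * AdjoinRoot.mk P u) * a = eps := by
        have e1 : eps * (AdjoinRoot.mk P u * a) + eps * (AdjoinRoot.mk P v * gbar) = eps := by
          rw [← mul_add, h1, mul_one]
        have e2 : eps * (AdjoinRoot.mk P v * gbar) = 0 := by
          rw [mul_left_comm, heps_g, mul_zero]
        rw [e2, add_zero] at e1
        linear_combination e1
      have hz0 : a ^ t0 * ι f - ι f = 0 := by
        have e3 : eps * (a ^ t0 * ι f - ι f)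
            = ((eps * AdjoinRoot.mk P u) * a) * (a ^ t0 * ι f - ι f) := by rw [hepsa]
        rw [mul_assoc, haz, mul_zero] at e3
        rw [← hepsz, e3]
      exact sub_eq_zero.mp hz0
  rw [hMC]
  exact not_congr hfinal
end

section
/- Let q = p^d be a prime power, let n be an odd prime with n ≠ p, and let f : ZMod n → F_q be a nontrivial multiplicative function, viewed as a vector in F_q^n. Then f is an almost most complicated point, and is not a most complicated point, for the finite difference operator Δ = δ − I on F_q^n. -/
open Function Polynomial Finset

section Helpers

section
variable {n : ℕ} [Fact n.Prime] {E : Type} [Field E] {ζ : E}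

/-- `ee ζ a = ζ ^ a.val`. -/
noncomputable def ee (ζ : E) (a : ZMod n) : E := ζ ^ a.val

lemma ee_zero (ζ : E) : ee ζ (0 : ZMod n) = 1 := by
  simp [ee]

lemma ee_add (hζ : ζ ^ n = 1) (a b : ZMod n) : ee ζ (a + b) = ee ζ a * ee ζ b := by
  unfold ee
  rw [ZMod.val_add, ← pow_add]
  exact (pow_eq_pow_mod _ hζ).symm

lemma ee_ne_one (hζ : IsPrimitiveRoot ζ n) {a : ZMod n} (ha : a ≠ 0) : ee ζ a ≠ 1 := by
  have h1 : 0 < a.val := by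
    rcases Nat.eq_zero_or_pos a.val with h | h
    · exact absurd (by rwa [ZMod.val_eq_zero] at h) ha
    · exact h
  exact hζ.pow_ne_one_of_pos_of_lt h1.ne' (ZMod.val_lt a)

/-- Geometric sum. -/
lemma geom_sum_ee (hζ : IsPrimitiveRoot ζ n) (m : ZMod n) :
    ∑ b : ZMod n, ee ζ (b * m) = if m = 0 then (n : E) else 0 := by
  by_cases hm : m = 0
  · simp [hm, ee_zero, Finset.card_univ, ZMod.card]
  · simp only [hm, if_false]
    have key : (ee ζ m - 1) * ∑ b : ZMod n, ee ζ (b * m) = 0 := by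
      have h1 : ζ ^ n = 1 := hζ.pow_eq_one
      have : ∀ b : ZMod n, (ee ζ m - 1) * ee ζ (b * m) = ee ζ ((b+1) * m) - ee ζ (b * m) := by
        intro b
        have : (b+1) * m = b * m + m := by ring
        rw [this, ee_add h1]
        ring
      rw [Finset.mul_sum]
      simp_rw [this]
      rw [Finset.sum_sub_distrib]
      have : ∑ b : ZMod n, ee ζ ((b+1) * m) = ∑ b : ZMod n, ee ζ (b * m) :=
        Fintype.sum_equiv (Equiv.addRight 1) _ _ (fun i => rfl)
      rw [this, sub_self]
    rcases mul_eq_zero.mp key with h | h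
    · exact absurd (sub_eq_zero.mp h) (ee_ne_one hζ hm)
    · exact h
end

section
variable {n : ℕ} [Fact n.Prime] {E : Type} [Field E] {ζ : E}
variable {F : Type} [Field F]

/-- Fourier coefficient. -/
noncomputable def cc (ζ : E) (φ : F →+* E) (j : ZMod n) (x : ZMod n → F) : E :=
  ∑ a : ZMod n, φ (x a) * ee ζ (a * j)

lemma cc_sub (φ : F →+* E) (j : ZMod n) (x y : ZMod n → F) :
    cc ζ φ j (x - y) = cc ζ φ j x - cc ζ φ j y := by
  unfold cc
  rw [← Finset.sum_sub_distrib]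
  refine Finset.sum_congr rfl fun a _ => ?_
  simp [Pi.sub_apply, map_sub, sub_mul]

lemma cc_zero_freq (φ : F →+* E) (x : ZMod n → F) :
    cc ζ φ (0 : ZMod n) x = φ (∑ a : ZMod n, x a) := by
  unfold cc
  rw [map_sum]
  refine Finset.sum_congr rfl fun a _ => ?_
  simp [ee_zero]

lemma cc_shift (hζ1 : ζ ^ n = 1) (φ : F →+* E) (j : ZMod n) (x : ZMod n → F) :
    cc ζ φ j (fun i => x (i + 1)) = ee ζ (-j) * cc ζ φ j x := by
  unfold cc
  have h1 : ∑ a : ZMod n, φ (x (a + 1)) * ee ζ (a * j)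
      = ∑ b : ZMod n, φ (x b) * ee ζ ((b - 1) * j) := by
    refine Fintype.sum_equiv (Equiv.addRight (1 : ZMod n)) _ _ fun a => ?_
    simp only [Equiv.coe_addRight, add_sub_cancel_right]
  rw [h1, Finset.mul_sum]
  refine Finset.sum_congr rfl fun b _ => ?_
  have h2 : (b - 1) * j = b * j + (-j) := by ring
  rw [h2, ee_add hζ1]
  ring

lemma dft_inj (hζ : IsPrimitiveRoot ζ n) (hnE : (n : E) ≠ 0) (φ : F →+* E)
    (x : ZMod n → F) (hc : ∀ j, cc ζ φ j x = 0) : x = 0 := by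
  funext a
  have key : ∑ j : ZMod n, ee ζ (-(a * j)) * cc ζ φ j x = φ (x a) * n := by
    unfold cc
    simp_rw [Finset.mul_sum]
    rw [Finset.sum_comm]
    have h1 : ∀ b j : ZMod n, ee ζ (-(a * j)) * (φ (x b) * ee ζ (b * j))
        = φ (x b) * ee ζ ((b - a) * j) := by
      intro b j
      have : (b - a) * j = b * j + (-(a * j)) := by ring
      rw [this, ee_add hζ.pow_eq_one]
      ring
    simp_rw [h1]
    have h2 : ∀ b : ZMod n, ∑ j : ZMod n, φ (x b) * ee ζ ((b - a) * j)
        = φ (x b) * (if b - a = 0 then (n : E) else 0) := by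
      intro b
      rw [← Finset.mul_sum]
      congr 1
      have h3 : ∀ j : ZMod n, (b - a) * j = j * (b - a) := fun j => mul_comm _ _
      simp_rw [h3]
      exact geom_sum_ee hζ (b - a)
    simp_rw [h2]
    rw [Finset.sum_eq_single a]
    · simp
    · intro b _ hb
      rw [if_neg (sub_ne_zero.mpr hb), mul_zero]
    · intro h; exact absurd (Finset.mem_univ a) h
  rw [Finset.sum_congr rfl (fun j _ => by rw [hc j, mul_zero]), Finset.sum_const,
    smul_zero] at key
  have : φ (x a) = 0 := by
    rcases mul_eq_zero.mp key.symm with h | h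
    · exact h
    · exact absurd h hnE
  have h0 : φ (x a) = φ 0 := by rw [this, map_zero]
  exact φ.injective h0

end

section
variable {n : ℕ} [Fact n.Prime] {E : Type} [Field E] {ζ : E} {F : Type} [Field F]

lemma gauss_ne_zero (hζ : IsPrimitiveRoot ζ n) (hnE : (n : E) ≠ 0) (φ : F →+* E)
    (f : ZMod n → F) (hf0 : f 0 = 0) (hfne : ∀ a : ZMod n, a ≠ 0 → f a ≠ 0)
    (hmul : ∀ a b : ZMod n, a ≠ 0 → b ≠ 0 → f (a * b) = f a * f b)
    (hsum : ∑ a : ZMod n, f a = 0) {j : ZMod n} (hj : j ≠ 0) :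
    cc ζ φ j f ≠ 0 := by
  have hζ1 : ζ ^ n = 1 := hζ.pow_eq_one
  set G := cc ζ φ j f with hG
  set G' := ∑ b : ZMod n, (φ (f b))⁻¹ * ee ζ (b * j) with hG'
  have hneg1 : (-1 : ZMod n) ≠ 0 := neg_ne_zero.mpr one_ne_zero
  have key : G * G' = φ (f (-1)) * n := by
    rw [hG', Finset.mul_sum]
    have step1 : ∀ b : ZMod n,
        G * ((φ (f b))⁻¹ * ee ζ (b * j)) = ∑ c : ZMod n, φ (f c) * ee ζ (b * (c + 1) * j) := by
      intro b
      by_cases hb : b = 0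
      · subst hb
        rw [hf0, map_zero, inv_zero, zero_mul, mul_zero]
        have : ∀ c : ZMod n, φ (f c) * ee ζ (0 * (c + 1) * j) = φ (f c) := by
          intro c; rw [zero_mul, zero_mul, ee_zero, mul_one]
        rw [Finset.sum_congr rfl (fun c _ => this c), ← map_sum, hsum, map_zero]
      · have hGre : G = ∑ c : ZMod n, φ (f (b * c)) * ee ζ (b * c * j) := by
          rw [hG]
          unfold cc
          refine (Fintype.sum_equiv (Equiv.mulLeft₀ b hb) _ _ fun c => ?_).symm
          rfl
        rw [hGre, Finset.sum_mul]
        refine Finset.sum_congr rfl fun c _ => ?_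
        by_cases hc : c = 0
        · subst hc
          rw [mul_zero, hf0, map_zero, zero_mul, zero_mul, zero_mul]
        · have hfb : φ (f b) ≠ 0 := fun h =>
            hfne b hb (φ.injective (h.trans (map_zero φ).symm))
          rw [hmul b c hb hc, map_mul]
          have hee : ee ζ (b * c * j) * ee ζ (b * j) = ee ζ (b * (c + 1) * j) := by
            rw [← ee_add hζ1]
            congr 1
            ring
          field_simp
          rw [show b * j * (c + 1) = b * (c + 1) * j by ring, ← hee]
          ring
    rw [Finset.sum_congr rfl (fun b _ => step1 b), Finset.sum_comm]
    have step2 : ∀ c : ZMod n, ∑ b : ZMod n, φ (f c) * ee ζ (b * (c + 1) * j)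
        = φ (f c) * (if (c + 1) * j = 0 then (n : E) else 0) := by
      intro c
      rw [← Finset.mul_sum]
      congr 1
      have h3 : ∀ b : ZMod n, b * (c + 1) * j = b * ((c + 1) * j) := fun b => by ring
      simp_rw [h3]
      exact geom_sum_ee hζ ((c + 1) * j)
    rw [Finset.sum_congr rfl (fun c _ => step2 c), Finset.sum_eq_single (-1 : ZMod n)]
    · rw [if_pos (by rw [neg_add_cancel, zero_mul])]
    · intro c _ hc
      rw [if_neg, mul_zero]
      exact mul_ne_zero (fun h => hc (by rwa [add_eq_zero_iff_eq_neg] at h)) hj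
    · intro h; exact absurd (Finset.mem_univ _) h
  intro hG0
  rw [hG0, zero_mul] at key
  have : φ (f (-1)) * (n : E) ≠ 0 :=
    mul_ne_zero (fun h => hfne _ hneg1 (φ.injective (h.trans (map_zero φ).symm))) hnE
  exact this key.symm

end

end Helpers

/-- a nontrivial multiplicative function `f : ZMod n → F_q` (`n` an odd
prime, `n ≠ p = char F_q`) is almost most complicated, and not most complicated, for the
finite difference operator `Δ = δ - I`. -/
theorem stmt12 (p d q n : ℕ) (hp : p.Prime) (hq : q = p ^ d)
    [Fact n.Prime] (hodd : Odd n) (hnp : n ≠ p)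
    (F : Type) [Field F] [Fintype F] [CharP F p] (hF : Fintype.card F = q)
    (f : ZMod n → F) (hf : IsMultFun f)
    (hnt : ∃ a : ZMod n, a ≠ 0 ∧ f a ≠ 1) :
    AlmostMostComplicated (fun y : ZMod n → F => (shiftOp F n - LinearMap.id : (ZMod n → F) →ₗ[F] (ZMod n → F)) y) f ∧
    ¬ MostComplicated (fun y : ZMod n → F => (shiftOp F n - LinearMap.id : (ZMod n → F) →ₗ[F] (ZMod n → F)) y) f := by
  obtain ⟨hf0, ⟨a₀, ha₀, hfa₀⟩, hmul⟩ := hf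
  obtain ⟨a₁, ha₁, hfa₁⟩ := hnt
  have hnprime : n.Prime := Fact.out
  set g := (fun y : ZMod n → F => (shiftOp F n - LinearMap.id : (ZMod n → F) →ₗ[F] (ZMod n → F)) y) with hgdef
  have hgapp : ∀ (x : ZMod n → F) (i : ZMod n), g x i = x (i + 1) - x i := fun x i => rfl
  -- n is nonzero in F and in any char-p field
  have hndvd : ¬ p ∣ n := by
    intro hdvd
    exact hnp ((Nat.prime_dvd_prime_iff_eq hp hnprime).mp hdvd).symm
  have hnF : (n : F) ≠ 0 := by
    rw [Ne, CharP.cast_eq_zero_iff F p n]; exact hndvd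
  -- f is nonvanishing away from 0
  have hfne : ∀ a : ZMod n, a ≠ 0 → f a ≠ 0 := by
    intro a ha h
    apply hfa₀
    have h1 : a * (a⁻¹ * a₀) = a₀ := by
      rw [← mul_assoc, mul_inv_cancel₀ ha, one_mul]
    rw [← h1, hmul a _ ha (mul_ne_zero (inv_ne_zero ha) ha₀), h, zero_mul]
  -- the total character sum vanishes
  have hsum0 : ∑ a : ZMod n, f a = 0 := by
    have h1 : f a₁ * ∑ a : ZMod n, f a = ∑ a : ZMod n, f a := by
      rw [Finset.mul_sum]
      refine Fintype.sum_equiv (Equiv.mulLeft₀ a₁ ha₁) _ _ fun c => ?_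
      by_cases hc : c = 0
      · simp [hc, hf0]
      · exact ((hmul a₁ c ha₁ hc).symm : f a₁ * f c = f (a₁ * c))
    have h2 : (f a₁ - 1) * ∑ a : ZMod n, f a = 0 := by
      rw [sub_mul, one_mul, h1, sub_self]
    rcases mul_eq_zero.mp h2 with h | h
    · exact absurd (sub_eq_zero.mp h) hfa₁
    · exact h
  -- g maps everything into the zero-sum hyperplane W
  have hWsum : ∀ x : ZMod n → F, ∑ i : ZMod n, g x i = 0 := by
    intro x
    have h1 : ∑ i : ZMod n, x (i + 1) = ∑ i : ZMod n, x i :=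
      Fintype.sum_equiv (Equiv.addRight (1 : ZMod n)) _ _ fun i => rfl
    simp_rw [hgapp]
    rw [Finset.sum_sub_distrib, h1, sub_self]
  -- g is injective on W
  have hginj : ∀ x y : ZMod n → F, ∑ i : ZMod n, x i = 0 → ∑ i : ZMod n, y i = 0 →
      g x = g y → x = y := by
    intro x y hx hy h
    have hz : ∀ i : ZMod n, (x - y) (i + 1) = (x - y) i := by
      intro i
      have := congrFun h i
      rw [hgapp, hgapp] at this
      simp only [Pi.sub_apply]
      linear_combination this
    have hzn : ∀ k : ℕ, (x - y) ((k : ZMod n)) = (x - y) 0 := by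
      intro k
      induction k with
      | zero => norm_num
      | succ k ih => push_cast; rw [hz ((k : ZMod n))]; exact ih
    have hzc : ∀ i : ZMod n, (x - y) i = (x - y) 0 := by
      intro i
      have := hzn i.val
      rwa [ZMod.natCast_zmod_val] at this
    have hsz : ∑ i : ZMod n, (x - y) i = 0 := by
      simp_rw [Pi.sub_apply]
      rw [Finset.sum_sub_distrib, hx, hy, sub_self]
    rw [Finset.sum_congr rfl (fun i _ => hzc i), Finset.sum_const, Finset.card_univ,
      ZMod.card, nsmul_eq_mul] at hsz
    have h0 : (x - y) 0 = 0 := by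
      rcases mul_eq_zero.mp hsz with h' | h'
      · exact absurd h' hnF
      · exact h'
    funext i
    have := hzc i
    rw [h0, Pi.sub_apply, sub_eq_zero] at this
    exact this
  -- iterates of anything land in W
  have hItW : ∀ (x : ZMod n → F) (k : ℕ), 1 ≤ k → ∑ i : ZMod n, (g^[k] x) i = 0 := by
    intro x k hk
    obtain ⟨k', rfl⟩ := Nat.exists_eq_add_of_le hk
    rw [add_comm, Function.iterate_succ_apply']
    exact hWsum _
  have hItWf : ∀ k : ℕ, ∑ i : ZMod n, (g^[k] f) i = 0 := by
    intro k
    rcases Nat.eq_zero_or_pos k with hk | hk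
    · subst hk; simpa using hsum0
    · exact hItW f k hk
  -- peeling off via injectivity on W
  have peel : ∀ s t : ℕ, 1 ≤ t → g^[s + t] f = g^[s] f → g^[t] f = f := by
    intro s
    induction s with
    | zero => intro t ht h; simpa using h
    | succ s ih =>
      intro t ht h
      apply ih t ht
      apply hginj _ _ (hItWf (s + t)) (hItWf s)
      have e1 : s + 1 + t = (s + t) + 1 := by ring
      rw [e1, Function.iterate_succ_apply', Function.iterate_succ_apply'] at h
      exact h
  -- existence of an eventual period
  have hexists : ∃ t : ℕ, 1 ≤ t ∧ ∃ s : ℕ, g^[s + t] f = g^[s] f := by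
    obtain ⟨a, b, hab, he⟩ := Finite.exists_ne_map_eq_of_infinite (fun k : ℕ => g^[k] f)
    rcases lt_or_gt_of_ne hab with hlt | hlt
    · exact ⟨b - a, by omega, a, by rw [show a + (b - a) = b by omega]; exact he.symm⟩
    · exact ⟨a - b, by omega, b, by rw [show b + (a - b) = a by omega]; exact he⟩
  set T := orbitPeriod g f with hTdef
  have hTmem : 1 ≤ T ∧ ∃ s : ℕ, g^[s + T] f = g^[s] f := Nat.sInf_mem hexists
  obtain ⟨hT1, s₀, hs₀⟩ := hTmem
  have hTf : g^[T] f = f := peel s₀ T hT1 hs₀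
  -- Fourier analysis over the algebraic closure
  set E := AlgebraicClosure F with hEdef
  haveI : CharP E p := charP_of_injective_ringHom (algebraMap F E).injective p
  have hnE : (n : E) ≠ 0 := by
    rw [Ne, CharP.cast_eq_zero_iff E p n]; exact hndvd
  haveI : NeZero (n : E) := ⟨hnE⟩
  obtain ⟨ζ, hζroot⟩ : ∃ z : E, (Polynomial.cyclotomic n E).IsRoot z := by
    apply IsAlgClosed.exists_root
    rw [Polynomial.degree_cyclotomic]
    have : 0 < n.totient := Nat.totient_pos.mpr hnprime.pos
    exact_mod_cast Nat.cast_ne_zero.mpr this.ne'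
  have hζ : IsPrimitiveRoot ζ n := Polynomial.isRoot_cyclotomic_iff.mp hζroot
  set φ := algebraMap F E with hφdef
  set w : ZMod n → E := fun j => ee ζ (-j) - 1 with hwdef
  have hccg : ∀ (j : ZMod n) (x : ZMod n → F), cc ζ φ j (g x) = w j * cc ζ φ j x := by
    intro j x
    have h1 : g x = (fun i => x (i + 1)) - x := funext fun i => hgapp x i
    rw [h1, cc_sub, cc_shift hζ.pow_eq_one, hwdef, sub_mul, one_mul]
  have hcciter : ∀ (k : ℕ) (j : ZMod n) (x : ZMod n → F),
      cc ζ φ j (g^[k] x) = w j ^ k * cc ζ φ j x := by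
    intro k
    induction k with
    | zero => intro j x; simp
    | succ k ih =>
      intro j x
      rw [Function.iterate_succ_apply', hccg, ih, pow_succ]
      ring
  have hw0 : w 0 = 0 := by rw [hwdef]; simp [ee_zero]
  -- nonzero frequencies: w j ^ T = 1
  have hroots : ∀ j : ZMod n, j ≠ 0 → w j ^ T = 1 := by
    intro j hj
    have h1 : cc ζ φ j (g^[T] f) = cc ζ φ j f := by rw [hTf]
    rw [hcciter] at h1
    have hG : cc ζ φ j f ≠ 0 := gauss_ne_zero hζ hnE φ f hf0 hfne hmul hsum0 hj
    replace h1 := mul_right_cancel₀ hG (h1.trans (one_mul _).symm)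
    exact h1
  -- every zero-sum vector is T-periodic
  have hfix : ∀ x : ZMod n → F, ∑ i : ZMod n, x i = 0 → g^[T] x = x := by
    intro x hx
    have hd : ∀ j : ZMod n, cc ζ φ j (g^[T] x - x) = 0 := by
      intro j
      rw [cc_sub, hcciter]
      by_cases hj : j = 0
      · subst hj
        rw [hw0, zero_pow (by omega : T ≠ 0), zero_mul, cc_zero_freq, hx, map_zero, sub_zero]
      · rw [hroots j hj, one_mul, sub_self]
    have := dft_inj hζ hnE φ _ hd
    exact sub_eq_zero.mp this
  -- every point is T-periodic after one step
  have hyfix : ∀ y : ZMod n → F, g^[1 + T] y = g^[1] y := by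
    intro y
    rw [add_comm, Function.iterate_succ_apply, Function.iterate_one]
    exact hfix (g y) (hWsum y)
  -- maximal period is T
  have hperle : ∀ y : ZMod n → F, orbitPeriod g y ≤ T :=
    fun y => Nat.sInf_le ⟨hT1, 1, hyfix y⟩
  have hsupper : Finset.univ.sup (fun y : ZMod n → F => orbitPeriod g y) = T := by
    apply le_antisymm
    · exact Finset.sup_le fun y _ => hperle y
    · exact Finset.le_sup (f := fun y : ZMod n → F => orbitPeriod g y) (Finset.mem_univ f)
  -- preperiod of f is 0
  have hpref : orbitPreperiod g f = 0 := by
    apply Nat.sInf_eq_zero.mpr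
    left
    exact ⟨T, hT1, by simpa using hTf⟩
  -- all preperiods are at most 1
  have hprele : ∀ y : ZMod n → F, orbitPreperiod g y ≤ 1 :=
    fun y => Nat.sInf_le ⟨T, hT1, hyfix y⟩
  -- the delta function has preperiod at least 1
  set y₀ : ZMod n → F := fun i => if i = 0 then 1 else 0 with hy₀def
  have hy₀sum : ∑ i : ZMod n, y₀ i = 1 := by
    rw [hy₀def]
    simp
  have hprey₀ : 1 ≤ orbitPreperiod g y₀ := by
    rw [Nat.one_le_iff_ne_zero]
    intro h0
    rcases Nat.sInf_eq_zero.mp h0 with hmem | hempty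
    · obtain ⟨t, ht1, ht⟩ := hmem
      rw [zero_add] at ht
      have h1 : ∑ i : ZMod n, (g^[t] y₀) i = 0 := hItW y₀ t ht1
      rw [ht] at h1
      simp only [Function.iterate_zero, id_eq] at h1
      rw [hy₀sum] at h1
      exact one_ne_zero h1
    · have : (1 : ℕ) ∈ {s | ∃ t, 1 ≤ t ∧ g^[s + t] y₀ = g^[s] y₀} := ⟨T, hT1, hyfix y₀⟩
      rw [hempty] at this
      exact this
  have hsuppre : Finset.univ.sup (fun y : ZMod n → F => orbitPreperiod g y) = 1 := by
    apply le_antisymm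
    · exact Finset.sup_le fun y _ => hprele y
    · exact le_trans hprey₀
        (Finset.le_sup (f := fun y : ZMod n → F => orbitPreperiod g y) (Finset.mem_univ y₀))
  refine ⟨⟨hsupper.symm, ?_⟩, ?_⟩
  · rw [hsuppre, hpref]
  · rintro ⟨-, h2⟩
    rw [hpref, hsuppre] at h2
    exact one_ne_zero h2.symm
end
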